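/- Suppose (a) there exist γ ≥ 0 and β_0, …, β_m ≥ 0 such that (γ + Σ_{i=0}^m α_i β_i)·A is strictly copositive, and (b) A is positive semidefinite and has an eigenvector d ∈ ℝ^n_+ corresponding to a nonzero eigenvalue such that (b_i − α_i b)ᵀd = 0 for every i = 0, 1, …, m. Then the set 𝒜_{P2} = {(g_0(x), g_1(x), …, g_m(x), f(x)) : x ∈ ℝ^n_+} + ℝ^{m+2}_+ is closed and convex; i.e., problem (P2) is strongly convexifiable. -/

import Mathlib

open Pointwise Matrix

private lemma stmt18_aux {ε CL Bc r : ℝ} (hε : 0 < ε) (hCL : 0 ≤ CL) (hr1 : 1 < r)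
    (hr3 : |Bc| + CL + 1 < ε * r) (hk : ε * r ^ 2 ≤ Bc + CL * r) : False := by
  nlinarith [le_abs_self Bc, abs_nonneg Bc,
    mul_nonneg (by linarith : (0:ℝ) ≤ r - 1)
      (by nlinarith [le_abs_self Bc, abs_nonneg Bc] : (0:ℝ) ≤ ε * r - CL)]

/-- For the uniform nonnegative quadratic program (P2), if
(a) (γ + Σᵢ αᵢβᵢ)·A is strictly copositive for some γ ≥ 0, βᵢ ≥ 0, and
(b) A is positive semidefinite with an eigenvector d ∈ ℝ^n_+ for a nonzero
eigenvalue μ satisfying (bᵢ − αᵢb)ᵀd = 0 for all i, then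
𝒜_{P2} = {(g₀(x), …, g_m(x), f(x)) : x ∈ ℝ^n_+} + ℝ^{m+2}_+ is closed and convex,
i.e. (P2) is strongly convexifiable. -/
theorem stmt_18 (n m : ℕ) (hn : 1 ≤ n)
    (A : Matrix (Fin n) (Fin n) ℝ) (hA : A.IsSymm)
    (b : Fin n → ℝ) (c : ℝ)
    (b' : Fin (m + 1) → Fin n → ℝ) (c' : Fin (m + 1) → ℝ) (α : Fin (m + 1) → ℝ)
    (f : (Fin n → ℝ) → ℝ) (hf : ∀ x, f x = x ⬝ᵥ A *ᵥ x + b ⬝ᵥ x + c)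
    (g : Fin (m + 1) → (Fin n → ℝ) → ℝ)
    (hg : ∀ i x, g i x = α i * (x ⬝ᵥ A *ᵥ x) + b' i ⬝ᵥ x + c' i)
    (γ : ℝ) (hγ : 0 ≤ γ) (β : Fin (m + 1) → ℝ) (hβ : ∀ i, 0 ≤ β i)
    (hcop : ∀ x : Fin n → ℝ, (∀ j, 0 ≤ x j) → x ≠ 0 →
      0 < x ⬝ᵥ ((γ + ∑ i, α i * β i) • A) *ᵥ x)
    (hpsd : A.PosSemidef)
    (d : Fin n → ℝ) (hd0 : d ≠ 0) (hdpos : ∀ j, 0 ≤ d j)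
    (μ : ℝ) (hμ : μ ≠ 0) (heig : A *ᵥ d = μ • d)
    (horth : ∀ i, (b' i - α i • b) ⬝ᵥ d = 0) :
    IsClosed ((fun x : Fin n → ℝ => ((fun i => g i x), f x)) '' {x | ∀ j, 0 ≤ x j}
      + {q : (Fin (m + 1) → ℝ) × ℝ | (∀ i, 0 ≤ q.1 i) ∧ 0 ≤ q.2}) ∧
    Convex ℝ ((fun x : Fin n → ℝ => ((fun i => g i x), f x)) '' {x | ∀ j, 0 ≤ x j}
      + {q : (Fin (m + 1) → ℝ) × ℝ | (∀ i, 0 ≤ q.1 i) ∧ 0 ≤ q.2}) := by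
  set q : (Fin n → ℝ) → ℝ := fun x => x ⬝ᵥ A *ᵥ x with hqdef
  set S := ((fun x : Fin n → ℝ => ((fun i => g i x), f x)) '' {x | ∀ j, 0 ≤ x j}
      + {q : (Fin (m + 1) → ℝ) × ℝ | (∀ i, 0 ≤ q.1 i) ∧ 0 ≤ q.2}) with hSdef
  -- basic bilinear facts
  have hsymm : ∀ x y : Fin n → ℝ, x ⬝ᵥ A *ᵥ y = y ⬝ᵥ A *ᵥ x := by
    intro x y
    rw [dotProduct_mulVec, ← Matrix.mulVec_transpose, hA.eq, dotProduct_comm]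
  have hqnn : ∀ x, 0 ≤ q x := fun x => by simpa using hpsd.dotProduct_mulVec_nonneg x
  have hexpand : ∀ (s t : ℝ) (x y : Fin n → ℝ),
      q (s • x + t • y) = s^2 * q x + 2 * s * t * (x ⬝ᵥ A *ᵥ y) + t^2 * q y := by
    intro s t x y
    have h1 : y ⬝ᵥ A *ᵥ x = x ⬝ᵥ A *ᵥ y := hsymm y x
    simp only [hqdef, Matrix.mulVec_add, Matrix.mulVec_smul, dotProduct_add,
      add_dotProduct, smul_dotProduct, dotProduct_smul, smul_eq_mul]
    rw [h1]; ring
  have hdotlin : ∀ (v : Fin n → ℝ) (s t : ℝ) (x y : Fin n → ℝ),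
      v ⬝ᵥ (s • x + t • y) = s * (v ⬝ᵥ x) + t * (v ⬝ᵥ y) := by
    intro v s t x y
    simp [dotProduct_add, dotProduct_smul]
  -- continuity facts
  have hqcont : Continuous q := by
    have hq2 : q = fun x => ∑ j, x j * ∑ l, A j l * x l := by
      funext x; simp [hqdef, dotProduct, Matrix.mulVec]
    rw [hq2]
    exact continuous_finset_sum _ fun j _ => (continuous_apply j).mul
      (continuous_finset_sum _ fun l _ => continuous_const.mul (continuous_apply l))
  have hdotcont : ∀ v : Fin n → ℝ, Continuous fun x : Fin n → ℝ => v ⬝ᵥ x := fun v =>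
    continuous_finset_sum _ fun j _ => continuous_const.mul (continuous_apply j)
  have hfc : Continuous f := by
    have : f = fun x => q x + b ⬝ᵥ x + c := by funext x; rw [hf]
    rw [this]; exact (hqcont.add (hdotcont b)).add continuous_const
  have hgc : ∀ i, Continuous (g i) := by
    intro i
    have : g i = fun x => α i * q x + b' i ⬝ᵥ x + c' i := by funext x; rw [hg i]
    rw [this]
    exact ((continuous_const.mul hqcont).add (hdotcont (b' i))).add continuous_const
  -- membership characterization
  have hmem : ∀ u : (Fin (m + 1) → ℝ) × ℝ,
      u ∈ S ↔ ∃ x, (∀ j, 0 ≤ x j) ∧ (∀ i, g i x ≤ u.1 i) ∧ f x ≤ u.2 := by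
    intro u
    rw [hSdef, Set.mem_add]
    constructor
    · rintro ⟨p, ⟨x, hx, rfl⟩, r, ⟨hr1, hr2⟩, hpr⟩
      refine ⟨x, hx, fun i => ?_, ?_⟩
      · have h : u.1 i = g i x + r.1 i := by rw [← hpr]; rfl
        rw [h]; linarith [hr1 i]
      · have h : u.2 = f x + r.2 := by rw [← hpr]; rfl
        rw [h]; linarith
    · rintro ⟨x, hx, hgi, hfx⟩
      refine ⟨((fun i => g i x), f x), ⟨x, hx, rfl⟩,
        ((fun i => u.1 i - g i x), u.2 - f x), ⟨fun i => by simpa using hgi i, by simpa using hfx⟩, ?_⟩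
      apply Prod.ext
      · funext i; simp
      · simp
  -- positivity of eigenvalue
  have hddpos : 0 < d ⬝ᵥ d := by
    obtain ⟨j, hj⟩ : ∃ j, d j ≠ 0 := by
      by_contra h; push_neg at h; exact hd0 (funext fun j => h j)
    have hdj : 0 < d j := lt_of_le_of_ne (hdpos j) (Ne.symm hj)
    exact Finset.sum_pos' (fun i _ => mul_self_nonneg _)
      ⟨j, Finset.mem_univ j, mul_pos hdj hdj⟩
  have hqd : q d = μ * (d ⬝ᵥ d) := by
    simp [hqdef, heig, dotProduct_smul]
  have hμpos : 0 < μ := by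
    rcases lt_or_ge 0 μ with h | h
    · exact h
    · exfalso
      have h1 : 0 ≤ μ * (d ⬝ᵥ d) := hqd ▸ hqnn d
      have h2 : μ < 0 := lt_of_le_of_ne h hμ
      nlinarith
  -- CONVEXITY
  have hconv : Convex ℝ S := by
    intro u hu v hv a bb ha hbb hab
    obtain ⟨x, hx, hgx, hfx⟩ := (hmem u).mp hu
    obtain ⟨y, hy, hgy, hfy⟩ := (hmem v).mp hv
    set z : Fin n → ℝ := a • x + bb • y with hzdef
    have hz : ∀ j, 0 ≤ z j := fun j => by
      have : z j = a * x j + bb * y j := rfl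
      rw [this]
      have := hx j; have := hy j
      positivity
    -- gap s ≥ 0
    set s : ℝ := a * q x + bb * q y - q z with hsdef2
    have hs : 0 ≤ s := by
      have hxy := hqnn (x - y)
      have hxyexp : q (x - y) = q x - 2 * (x ⬝ᵥ A *ᵥ y) + q y := by
        have := hexpand 1 (-1) x y
        simpa [sub_eq_add_neg] using this
      have hzq : q z = a^2 * q x + 2 * a * bb * (x ⬝ᵥ A *ᵥ y) + bb^2 * q y :=
        hexpand a bb x y
      have key : a * q x + bb * q y - q z = a * bb * q (x - y) := by
        rw [hzq, hxyexp]
        have hbb' : bb = 1 - a := by linarith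
        rw [hbb']; ring
      rw [hsdef2, key]
      exact mul_nonneg (mul_nonneg ha hbb) hxy
    -- find t ≥ 0 with δ t = s, where δ t = q(z + t•d) - q z + t * (b ⬝ᵥ d)
    set e : ℝ := b ⬝ᵥ d with hedef
    set zd : ℝ := z ⬝ᵥ d with hzddef
    have hzdnn : 0 ≤ zd := by
      rw [hzddef]
      exact Finset.sum_nonneg fun j _ => mul_nonneg (hz j) (hdpos j)
    have hzAd : z ⬝ᵥ A *ᵥ d = μ * zd := by
      simp [heig, dotProduct_smul, hzddef, smul_eq_mul]
    set δ : ℝ → ℝ := fun t => μ * (d ⬝ᵥ d) * t^2 + (2 * μ * zd + e) * t with hδdef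
    have hδq : ∀ t : ℝ, 0 ≤ t → q (z + t • d) = q z + μ * (d ⬝ᵥ d) * t^2 + 2 * μ * zd * t := by
      intro t ht
      have := hexpand 1 t z d
      simp only [one_smul, one_pow, one_mul] at this
      rw [this, hzAd, hqd]; ring
    have hδcont : Continuous δ := by
      rw [hδdef]
      exact (continuous_const.mul (continuous_pow 2)).add (continuous_const.mul continuous_id)
    set T : ℝ := max 1 ((s + |e|) / (μ * (d ⬝ᵥ d))) with hTdef
    have hT1 : 1 ≤ T := le_max_left _ _
    have hT0 : 0 ≤ T := by linarith
    have hδT : s ≤ δ T := by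
      have hmd : 0 < μ * (d ⬝ᵥ d) := mul_pos hμpos hddpos
      have h2 : (s + |e|) / (μ * (d ⬝ᵥ d)) ≤ T := le_max_right _ _
      have h3 : s + |e| ≤ μ * (d ⬝ᵥ d) * T := by
        rw [div_le_iff₀ hmd] at h2; linarith
      have h4 : -e ≤ |e| := neg_le_abs e
      have h5 : 0 ≤ 2 * μ * zd := by positivity
      have : δ T = μ * (d ⬝ᵥ d) * T^2 + (2 * μ * zd + e) * T := rfl
      nlinarith
    have hδ0 : δ 0 = 0 := by simp [hδdef]
    obtain ⟨t, ht, hts⟩ : ∃ t ∈ Set.Icc (0:ℝ) T, δ t = s := by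
      have := intermediate_value_Icc hT0 hδcont.continuousOn
      have hsmem : s ∈ Set.Icc (δ 0) (δ T) := by
        rw [hδ0]; exact ⟨hs, hδT⟩
      obtain ⟨t, ht, hts⟩ := this hsmem
      exact ⟨t, ht, hts⟩
    -- witness w
    set w : Fin n → ℝ := z + t • d with hwdef
    have hw : ∀ j, 0 ≤ w j := fun j => by
      have : w j = z j + t * d j := rfl
      rw [this]
      have := hz j; have := hdpos j; have := ht.1
      positivity
    have hqw : q w + t * e - q z = s := by
      rw [hwdef, hδq t ht.1, ← hts, hδdef]; ring
    rw [hmem]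
    refine ⟨w, hw, fun i => ?_, ?_⟩
    · -- g i w ≤ (a • u + bb • v).1 i
      have hbd : b' i ⬝ᵥ d = α i * e := by
        have := horth i
        simp only [sub_dotProduct, smul_dotProduct, smul_eq_mul, sub_eq_zero] at this
        rw [this, hedef]
      have hbw : b' i ⬝ᵥ w = b' i ⬝ᵥ z + t * (α i * e) := by
        rw [hwdef]
        simp [dotProduct_add, dotProduct_smul, hbd, smul_eq_mul]
      have hbz : b' i ⬝ᵥ z = a * (b' i ⬝ᵥ x) + bb * (b' i ⬝ᵥ y) := hdotlin _ a bb x y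
      have hcomb : g i w = a * g i x + bb * g i y := by
        rw [hg i w, hg i x, hg i y, hbw, hbz]
        have hqww : w ⬝ᵥ A *ᵥ w = q z + s - t * e := by
          show q w = _
          linarith [hqw]
        have hbb' : bb = 1 - a := by linarith
        rw [hqww, hsdef2, hbb']
        ring
      have hval : (a • u + bb • v).1 i = a * u.1 i + bb * v.1 i := by
        simp [Prod.fst_add, Prod.smul_fst, Pi.add_apply, Pi.smul_apply, smul_eq_mul]
      rw [hval, hcomb]
      exact add_le_add (mul_le_mul_of_nonneg_left (hgx i) ha)
        (mul_le_mul_of_nonneg_left (hgy i) hbb)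
    · have hbw : b ⬝ᵥ w = b ⬝ᵥ z + t * e := by
        rw [hwdef]
        simp [dotProduct_add, dotProduct_smul, hedef, smul_eq_mul]
      have hbz : b ⬝ᵥ z = a * (b ⬝ᵥ x) + bb * (b ⬝ᵥ y) := hdotlin _ a bb x y
      have hcomb : f w = a * f x + bb * f y := by
        rw [hf w, hf x, hf y, hbw, hbz]
        have hqww : w ⬝ᵥ A *ᵥ w = q z + s - t * e := by
          show q w = _
          linarith [hqw]
        have hbb' : bb = 1 - a := by linarith
        rw [hqww, hsdef2, hbb']
        ring
      have hval : (a • u + bb • v).2 = a * u.2 + bb * v.2 := by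
        simp [Prod.snd_add, Prod.smul_snd, smul_eq_mul]
      rw [hval, hcomb]
      exact add_le_add (mul_le_mul_of_nonneg_left hfx ha)
        (mul_le_mul_of_nonneg_left hfy hbb)
  -- CLOSEDNESS
  have horthclosed : IsClosed {x : Fin n → ℝ | ∀ j, 0 ≤ x j} := by
    have : {x : Fin n → ℝ | ∀ j, 0 ≤ x j} = ⋂ j, {x | 0 ≤ x j} := by
      ext x; simp [Set.mem_iInter]
    rw [this]
    exact isClosed_iInter fun j => isClosed_le continuous_const (continuous_apply j)
  have hclosed : IsClosed S := by
    set c₀ : ℝ := γ + ∑ i, α i * β i with hc0def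
    have hcop' : ∀ x : Fin n → ℝ, (∀ j, 0 ≤ x j) → x ≠ 0 → 0 < c₀ * q x := by
      intro x h1 h2
      have := hcop x h1 h2
      rwa [Matrix.smul_mulVec, dotProduct_smul, smul_eq_mul] at this
    -- strict copositivity gives uniform bound on unit sphere of the orthant
    have hsphere : ∃ ε : ℝ, 0 < ε ∧ ∀ x : Fin n → ℝ, (∀ j, 0 ≤ x j) → ε * ‖x‖^2 ≤ c₀ * q x := by
      set K₁ : Set (Fin n → ℝ) := {y | (∀ j, 0 ≤ y j) ∧ ‖y‖ = 1} with hK1def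
      have hK1c : IsCompact K₁ := by
        have hsub : K₁ ⊆ Metric.closedBall 0 1 := by
          rintro y ⟨_, hy⟩
          rw [mem_closedBall_zero_iff, hy]
        have hcl : IsClosed K₁ := by
          have : K₁ = {y : Fin n → ℝ | ∀ j, 0 ≤ y j} ∩ {y | ‖y‖ = 1} := rfl
          rw [this]
          exact horthclosed.inter (isClosed_eq continuous_norm continuous_const)
        exact (isCompact_closedBall 0 1).of_isClosed_subset hcl hsub
      have hK1ne : K₁.Nonempty := by
        have hne : Nonempty (Fin n) := Fin.pos_iff_nonempty.mp hn
        refine ⟨fun _ => 1, fun j => zero_le_one, ?_⟩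
        rw [pi_norm_const (1:ℝ)]
        simp
      obtain ⟨y₀, hy₀K, hy₀min⟩ := hK1c.exists_isMinOn hK1ne
        ((continuous_const.mul hqcont).continuousOn)
      have hy₀ne : y₀ ≠ 0 := by
        intro h
        have := hy₀K.2
        rw [h] at this; simp at this
      have hε : 0 < c₀ * q y₀ := hcop' y₀ hy₀K.1 hy₀ne
      refine ⟨c₀ * q y₀, hε, ?_⟩
      intro x hxnn
      rcases eq_or_ne x 0 with rfl | hx0
      · simp [hqdef]
      · have hxn : 0 < ‖x‖ := norm_pos_iff.mpr hx0
        set y : Fin n → ℝ := ‖x‖⁻¹ • x with hydef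
        have hyK : y ∈ K₁ := by
          constructor
          · intro j
            have : y j = ‖x‖⁻¹ * x j := rfl
            rw [this]
            exact mul_nonneg (by positivity) (hxnn j)
          · rw [hydef, norm_smul]
            simp [abs_of_pos (inv_pos.mpr hxn), inv_mul_cancel₀ (ne_of_gt hxn)]
        have hmin := hy₀min hyK
        have hqy : q y = ‖x‖⁻¹^2 * q x := by
          have := hexpand (‖x‖⁻¹) 0 x 0
          simp only [smul_zero, add_zero, zero_smul] at this
          simpa [hydef] using this
        simp only [Set.mem_setOf_eq] at hmin
        have hmin' : c₀ * q y₀ ≤ c₀ * (‖x‖⁻¹^2 * q x) := by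
          rw [← hqy]; exact hmin
        have hinv : ‖x‖⁻¹^2 * ‖x‖^2 = 1 := by
          field_simp
        calc c₀ * q y₀ * ‖x‖^2 ≤ c₀ * (‖x‖⁻¹^2 * q x) * ‖x‖^2 :=
              mul_le_mul_of_nonneg_right hmin' (sq_nonneg _)
          _ = c₀ * q x * (‖x‖⁻¹^2 * ‖x‖^2) := by ring
          _ = c₀ * q x := by rw [hinv, mul_one]
    obtain ⟨ε, hε, hεbound⟩ := hsphere
    -- dot product bound
    have hdotbd : ∀ v x : Fin n → ℝ, -((∑ j, |v j|) * ‖x‖) ≤ v ⬝ᵥ x := by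
      intro v x
      have h1 : |v ⬝ᵥ x| ≤ (∑ j, |v j|) * ‖x‖ := by
        calc |v ⬝ᵥ x| = |∑ j, v j * x j| := rfl
          _ ≤ ∑ j, |v j * x j| := Finset.abs_sum_le_sum_abs _ _
          _ = ∑ j, |v j| * |x j| := by simp [abs_mul]
          _ ≤ ∑ j, |v j| * ‖x‖ := Finset.sum_le_sum fun j _ => by
              have := norm_le_pi_norm x j
              rw [Real.norm_eq_abs] at this
              exact mul_le_mul_of_nonneg_left this (abs_nonneg _)
          _ = (∑ j, |v j|) * ‖x‖ := by rw [Finset.sum_mul]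
      linarith [neg_abs_le (v ⬝ᵥ x)]
    -- the combined functional identity
    have hcombid : ∀ x : Fin n → ℝ, γ * f x + ∑ i, β i * g i x
        = c₀ * q x + (γ * (b ⬝ᵥ x) + ∑ i, β i * (b' i ⬝ᵥ x)) + (γ * c + ∑ i, β i * c' i) := by
      intro x
      rw [hf x]
      have hsum : ∀ i : Fin (m+1), β i * g i x
          = α i * β i * q x + β i * (b' i ⬝ᵥ x) + β i * c' i := by
        intro i; rw [hg i x]; ring
      rw [Finset.sum_congr rfl (fun i _ => hsum i)]
      rw [Finset.sum_add_distrib, Finset.sum_add_distrib, ← Finset.sum_mul, hc0def]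
      show γ * (q x + b ⬝ᵥ x + c) + _ = _
      ring
    apply IsSeqClosed.isClosed
    intro u u0 hu hlim
    choose x hx hgx hfx using fun k => (hmem (u k)).mp (hu k)
    -- weights sequence is bounded above
    set W : ℕ → ℝ := fun k => γ * (u k).2 + ∑ i, β i * (u k).1 i with hWdef
    have hWlim : Filter.Tendsto W Filter.atTop (nhds (γ * u0.2 + ∑ i, β i * u0.1 i)) := by
      apply Filter.Tendsto.add
      · exact (Filter.Tendsto.comp (Continuous.tendsto continuous_snd u0) hlim).const_mul γ
      · apply tendsto_finset_sum
        intro i _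
        exact (Filter.Tendsto.comp (Continuous.tendsto ((continuous_apply i).comp continuous_fst) u0) hlim).const_mul (β i)
    obtain ⟨B, hB⟩ := hWlim.bddAbove_range
    have hBk : ∀ k, W k ≤ B := fun k => hB ⟨k, rfl⟩
    -- bound: ε ‖x k‖² ≤ B - Cc + CL ‖x k‖
    set CL : ℝ := γ * (∑ j, |b j|) + ∑ i, β i * (∑ j, |b' i j|) with hCLdef
    have hCLnn : 0 ≤ CL := by
      apply add_nonneg
      · exact mul_nonneg hγ (Finset.sum_nonneg fun j _ => abs_nonneg _)
      · exact Finset.sum_nonneg fun i _ => mul_nonneg (hβ i)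
          (Finset.sum_nonneg fun j _ => abs_nonneg _)
    set Cc : ℝ := γ * c + ∑ i, β i * c' i with hCcdef
    have hkey : ∀ k, ε * ‖x k‖^2 ≤ B - Cc + CL * ‖x k‖ := by
      intro k
      have h1 : γ * f (x k) + ∑ i, β i * g i (x k) ≤ W k := by
        rw [hWdef]
        apply add_le_add
        · exact mul_le_mul_of_nonneg_left (hfx k) hγ
        · exact Finset.sum_le_sum fun i _ => mul_le_mul_of_nonneg_left (hgx k i) (hβ i)
      have h2 := hcombid (x k)
      have h3 : ε * ‖x k‖^2 ≤ c₀ * q (x k) := hεbound (x k) (hx k)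
      have h4 : -(CL * ‖x k‖) ≤ γ * (b ⬝ᵥ x k) + ∑ i, β i * (b' i ⬝ᵥ x k) := by
        rw [hCLdef]
        have hb1 := hdotbd b (x k)
        have hb2 : ∀ i : Fin (m+1), β i * (-((∑ j, |b' i j|) * ‖x k‖)) ≤ β i * (b' i ⬝ᵥ x k) :=
          fun i => mul_le_mul_of_nonneg_left (hdotbd (b' i) (x k)) (hβ i)
        have hsum2 : ∑ i, β i * (-((∑ j, |b' i j|) * ‖x k‖)) ≤ ∑ i, β i * (b' i ⬝ᵥ x k) :=
          Finset.sum_le_sum fun i _ => hb2 i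
        have heq : ∑ i, β i * (-((∑ j, |b' i j|) * ‖x k‖))
            = -((∑ i, β i * (∑ j, |b' i j|)) * ‖x k‖) := by
          rw [Finset.sum_mul, ← Finset.sum_neg_distrib]
          apply Finset.sum_congr rfl
          intro i _; ring
        have hb1' : γ * (-((∑ j, |b j|) * ‖x k‖)) ≤ γ * (b ⬝ᵥ x k) :=
          mul_le_mul_of_nonneg_left hb1 hγ
        have hfin := add_le_add hb1' (heq ▸ hsum2)
        calc -((γ * (∑ j, |b j|) + ∑ i, β i * ∑ j, |b' i j|) * ‖x k‖)
            = γ * (-((∑ j, |b j|) * ‖x k‖)) + -((∑ i, β i * (∑ j, |b' i j|)) * ‖x k‖) := by ring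
          _ ≤ γ * (b ⬝ᵥ x k) + ∑ i, β i * (b' i ⬝ᵥ x k) := hfin
      have h5 := hBk k
      linarith only [h1, h2, h3, h4, h5]
    -- hence ‖x k‖ bounded
    set M : ℝ := max 1 ((|B - Cc| + CL + 1) / ε) with hMdef
    have hM1 : 1 ≤ M := le_max_left _ _
    have hxbd : ∀ k, ‖x k‖ ≤ M := by
      intro k
      by_contra h
      push_neg at h
      set r : ℝ := ‖x k‖ with hrdef
      have hr1 : 1 < r := lt_of_le_of_lt hM1 h
      have hr2 : (|B - Cc| + CL + 1) / ε < r := lt_of_le_of_lt (le_max_right _ _) h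
      have hr3 : |B - Cc| + CL + 1 < ε * r := by
        rw [div_lt_iff₀ hε] at hr2; linarith
      have hk : ε * r ^ 2 ≤ (B - Cc) + CL * r := hkey k
      exact stmt18_aux hε hCLnn hr1 hr3 hk
    -- compactness, convergent subsequence
    have hcompact : IsCompact (Metric.closedBall (0 : Fin n → ℝ) M ∩ {x | ∀ j, 0 ≤ x j}) :=
      (isCompact_closedBall 0 M).inter_right horthclosed
    obtain ⟨x₀, hx₀mem, φ, hφ, hxconv⟩ := hcompact.tendsto_subseq
      (x := x) (fun k => ⟨mem_closedBall_zero_iff.mpr (hxbd k), hx k⟩)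
    rw [hmem]
    refine ⟨x₀, hx₀mem.2, fun i => ?_, ?_⟩
    · refine le_of_tendsto_of_tendsto' (b := Filter.atTop) (f := fun k => g i (x (φ k)))
        (g := fun k => (u (φ k)).1 i) ?_ ?_ ?_
      · exact ((hgc i).tendsto x₀).comp hxconv
      · exact (Filter.Tendsto.comp (Continuous.tendsto ((continuous_apply i).comp continuous_fst) u0)
          (hlim.comp hφ.tendsto_atTop))
      · exact fun k => hgx (φ k) i
    · refine le_of_tendsto_of_tendsto' (b := Filter.atTop) (f := fun k => f (x (φ k)))
        (g := fun k => (u (φ k)).2) ?_ ?_ ?_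
      · exact (hfc.tendsto x₀).comp hxconv
      · exact (Filter.Tendsto.comp (Continuous.tendsto continuous_snd u0)
          (hlim.comp hφ.tendsto_atTop))
      · exact fun k => hfx (φ k)
  exact ⟨hclosed, hconv⟩
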